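/- Let U ⊆ ℝ³ be open, ν : U → ℝ twice continuously differentiable with |∇ν(x)| = 1 for all x ∈ U, w : U → ℂ³ twice continuously differentiable, P ∈ ℂ[X] a polynomial, z ∈ ℂ, and s = z². Then on U one has the identity (s − Δ)(e^{−zν} · P(zν) · w) = e^{−zν} · [ z² · (2P′ − P″)(zν) · w − z · (P′ − P)(zν) · ( (Δν)·w + 2·∑_{j=1}^{3} (∂_j ν)·(∂_j w) ) − P(zν) · Δw ]. -/

import Mathlib

open Polynomial

/-- The Laplacian `Δf = ∑_{j=1}^{3} ∂²f/∂x_j²` of a function on `ℝ³`,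
acting componentwise on vector-valued functions. -/
noncomputable def lap {F : Type*} [NormedAddCommGroup F] [NormedSpace ℝ F]
    (f : EuclideanSpace ℝ (Fin 3) → F) (x : EuclideanSpace ℝ (Fin 3)) : F :=
  ∑ i : Fin 3,
    fderiv ℝ (fun y => fderiv ℝ f y (EuclideanSpace.single i 1)) x (EuclideanSpace.single i 1)

noncomputable def gz (z : ℂ) (Q : Polynomial ℂ) (t : ℝ) : ℂ :=
  Complex.exp (-z * t) * Q.eval (z * t)

noncomputable def Dz (z : ℂ) (Q : Polynomial ℂ) : Polynomial ℂ := C z * (derivative Q - Q)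

lemma gz_hasDerivAt (z : ℂ) (Q : Polynomial ℂ) (t : ℝ) :
    HasDerivAt (gz z Q) (gz z (Dz z Q) t) t := by
  unfold gz Dz
  have h1 : HasDerivAt (fun u : ℂ => Complex.exp (-z * u) * Q.eval (z * u))
      (Complex.exp (-z * t) * ((C z * (derivative Q - Q)).eval (z * t))) (t : ℂ) := by
    have he : HasDerivAt (fun u : ℂ => Complex.exp (-z * u))
        (Complex.exp (-z * t) * (-z)) (t : ℂ) := by
      simpa using (((hasDerivAt_id ((t : ℝ) : ℂ)).const_mul (-z)).cexp)
    have h0 : HasDerivAt (fun u : ℂ => z * u) z (t : ℂ) := by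
      simpa using (hasDerivAt_id ((t : ℝ) : ℂ)).const_mul z
    have hp : HasDerivAt (fun u : ℂ => Q.eval (z * u)) ((derivative Q).eval (z * t) * z)
        (t : ℂ) := by
      exact (Q.hasDerivAt (z * t)).comp ((t : ℝ) : ℂ) h0
    have : HasDerivAt (fun u : ℂ => Complex.exp (-z * u) * Q.eval (z * u)) _ (t : ℂ) :=
      he.mul hp
    convert this using 1
    simp only [Polynomial.eval_mul, Polynomial.eval_sub, Polynomial.eval_C]
    ring
  exact h1.comp_ofReal

/-- for `ν : U → ℝ` of class `C²` with `|∇ν| = 1` on `U`, `w : U → ℂ³` of class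
`C²`, a polynomial `P ∈ ℂ[X]`, `z ∈ ℂ` and `s = z²`, on `U` one has
`(s − Δ)(e^{−zν} · P(zν) · w)
  = e^{−zν} · [ z²·(2P′ − P″)(zν)·w − z·(P′ − P)(zν)·((Δν)·w + 2·∑_j (∂_j ν)·(∂_j w))
      − P(zν)·Δw ]`. -/
theorem statement7
    (U : Set (EuclideanSpace ℝ (Fin 3))) (hU : IsOpen U)
    (ν : EuclideanSpace ℝ (Fin 3) → ℝ)
    (hν : ContDiffOn ℝ 2 ν U)
    (hgrad : ∀ x ∈ U, ‖gradient ν x‖ = 1)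
    (w : EuclideanSpace ℝ (Fin 3) → EuclideanSpace ℂ (Fin 3))
    (hw : ContDiffOn ℝ 2 w U)
    (P : Polynomial ℂ) (z s : ℂ) (hs : s = z ^ 2)
    (x : EuclideanSpace ℝ (Fin 3)) (hx : x ∈ U) :
    s • (Complex.exp (-z * (ν x : ℂ)) • (P.eval (z * (ν x : ℂ))) • w x)
        - lap (fun y => Complex.exp (-z * (ν y : ℂ)) • (P.eval (z * (ν y : ℂ))) • w y) x
      = Complex.exp (-z * (ν x : ℂ)) •
          ((z ^ 2 * (2 * derivative P - derivative (derivative P)).eval (z * (ν x : ℂ))) • w x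
            - (z * (derivative P - P).eval (z * (ν x : ℂ))) •
                (((lap ν x : ℝ) : ℂ) • w x
                  + (2 : ℂ) • ∑ j : Fin 3,
                      ((fderiv ℝ ν x (EuclideanSpace.single j 1) : ℝ) : ℂ) •
                        fderiv ℝ w x (EuclideanSpace.single j 1))
            - (P.eval (z * (ν x : ℂ))) • lap w x) := by
  classical
  -- rewrite the function under lap
  have hfeq : (fun y => Complex.exp (-z * (ν y : ℂ)) • (P.eval (z * (ν y : ℂ))) • w y)
      = fun y => gz z P (ν y) • w y := by
    funext y; rw [gz, smul_smul]
  rw [hfeq]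
  set f : EuclideanSpace ℝ (Fin 3) → EuclideanSpace ℂ (Fin 3) := fun y => gz z P (ν y) • w y
    with hf
  -- basic differentiability
  have hνd : ∀ y ∈ U, DifferentiableAt ℝ ν y := fun y hy =>
    (hν.contDiffAt (hU.mem_nhds hy)).differentiableAt two_ne_zero
  have hwd : ∀ y ∈ U, DifferentiableAt ℝ w y := fun y hy =>
    (hw.contDiffAt (hU.mem_nhds hy)).differentiableAt two_ne_zero
  -- derivative of gz ∘ ν
  have hgν : ∀ (Q : Polynomial ℂ), ∀ y ∈ U, HasFDerivAt (fun y => gz z Q (ν y))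
      ((ContinuousLinearMap.smulRight (1 : ℝ →L[ℝ] ℝ) (gz z (Dz z Q) (ν y))).comp
        (fderiv ℝ ν y)) y := by
    intro Q y hy
    exact ((gz_hasDerivAt z Q (ν y)).hasFDerivAt).comp y (hνd y hy).hasFDerivAt
  -- first derivative of f on U
  have hkey : ∀ (j : Fin 3), ∀ y ∈ U, fderiv ℝ f y (EuclideanSpace.single j (1:ℝ))
      = (gz z (Dz z P) (ν y) * ((fderiv ℝ ν y (EuclideanSpace.single j (1:ℝ)) : ℝ) : ℂ)) • w y
        + gz z P (ν y) • fderiv ℝ w y (EuclideanSpace.single j (1:ℝ)) := by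
    intro j y hy
    have hD : HasFDerivAt (fun y => gz z P (ν y) • w y) _ y :=
      (hgν P y hy).smul (hwd y hy).hasFDerivAt
    rw [hD.fderiv]
    simp only [ContinuousLinearMap.add_apply, ContinuousLinearMap.smul_apply,
      ContinuousLinearMap.smulRight_apply, ContinuousLinearMap.comp_apply,
      ContinuousLinearMap.one_apply, Complex.real_smul, one_smul, smul_eq_mul]
    rw [add_comm]
    norm_num [mul_comm]
  -- second-derivative ingredients at x
  have hν2 : ContDiffAt ℝ 2 ν x := hν.contDiffAt (hU.mem_nhds hx)
  have hw2 : ContDiffAt ℝ 2 w x := hw.contDiffAt (hU.mem_nhds hx)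
  have hdν : DifferentiableAt ℝ (fderiv ℝ ν) x :=
    (hν2.fderiv_right (le_refl 2)).differentiableAt one_ne_zero
  have hdw : DifferentiableAt ℝ (fderiv ℝ w) x :=
    (hw2.fderiv_right (le_refl 2)).differentiableAt one_ne_zero
  have hνx : HasFDerivAt ν (fderiv ℝ ν x) x := (hνd x hx).hasFDerivAt
  have hwx : HasFDerivAt w (fderiv ℝ w x) x := (hwd x hx).hasFDerivAt
  have hMj : ∀ j : Fin 3, HasFDerivAt (fun y => fderiv ℝ ν y (EuclideanSpace.single j (1:ℝ)))
      (fderiv ℝ (fun y => fderiv ℝ ν y (EuclideanSpace.single j (1:ℝ))) x) x :=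
    fun j => (hdν.clm_apply (differentiableAt_const _)).hasFDerivAt
  have hKj : ∀ j : Fin 3, HasFDerivAt (fun y => fderiv ℝ w y (EuclideanSpace.single j (1:ℝ)))
      (fderiv ℝ (fun y => fderiv ℝ w y (EuclideanSpace.single j (1:ℝ))) x) x :=
    fun j => (hdw.clm_apply (differentiableAt_const _)).hasFDerivAt
  have hcν : ∀ j : Fin 3,
      HasFDerivAt (fun y => ((fderiv ℝ ν y (EuclideanSpace.single j (1:ℝ)) : ℝ) : ℂ))
      (Complex.ofRealCLM.comp (fderiv ℝ (fun y =>
        fderiv ℝ ν y (EuclideanSpace.single j (1:ℝ))) x)) x :=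
    fun j => (Complex.ofRealCLM.hasFDerivAt).comp x (hMj j)
  -- second derivative of f
  have hfinal : ∀ j : Fin 3,
      fderiv ℝ (fun y => fderiv ℝ f y (EuclideanSpace.single j (1:ℝ))) x
        (EuclideanSpace.single j (1:ℝ))
      = (gz z (Dz z (Dz z P)) (ν x) *
            (((fderiv ℝ ν x (EuclideanSpace.single j (1:ℝ)) : ℝ) : ℂ) *
             ((fderiv ℝ ν x (EuclideanSpace.single j (1:ℝ)) : ℝ) : ℂ))
          + gz z (Dz z P) (ν x) *
            ((fderiv ℝ (fun y => fderiv ℝ ν y (EuclideanSpace.single j (1:ℝ))) x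
                (EuclideanSpace.single j (1:ℝ)) : ℝ) : ℂ)) • w x
        + (gz z (Dz z P) (ν x) * ((fderiv ℝ ν x (EuclideanSpace.single j (1:ℝ)) : ℝ) : ℂ)) •
            fderiv ℝ w x (EuclideanSpace.single j (1:ℝ))
        + (gz z (Dz z P) (ν x) * ((fderiv ℝ ν x (EuclideanSpace.single j (1:ℝ)) : ℝ) : ℂ)) •
            fderiv ℝ w x (EuclideanSpace.single j (1:ℝ))
        + gz z P (ν x) • fderiv ℝ (fun y => fderiv ℝ w y (EuclideanSpace.single j (1:ℝ))) x
            (EuclideanSpace.single j (1:ℝ)) := by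
    intro j
    have hEv : (fun y => fderiv ℝ f y (EuclideanSpace.single j (1:ℝ))) =ᶠ[nhds x]
        (fun y => (gz z (Dz z P) (ν y) *
            ((fderiv ℝ ν y (EuclideanSpace.single j (1:ℝ)) : ℝ) : ℂ)) • w y
          + gz z P (ν y) • fderiv ℝ w y (EuclideanSpace.single j (1:ℝ))) :=
      Filter.eventuallyEq_of_mem (hU.mem_nhds hx) (hkey j)
    rw [hEv.fderiv_eq]
    have hT1 := (show HasFDerivAt (fun y => gz z (Dz z P) (ν y) *
        ((fderiv ℝ ν y (EuclideanSpace.single j (1:ℝ)) : ℝ) : ℂ)) _ x from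
      (hgν (Dz z P) x hx).mul (hcν j)).smul hwx
    have hT2 := (hgν P x hx).smul (hKj j)
    have hD : HasFDerivAt (fun y => (gz z (Dz z P) (ν y) *
        ((fderiv ℝ ν y (EuclideanSpace.single j (1:ℝ)) : ℝ) : ℂ)) • w y
          + gz z P (ν y) • fderiv ℝ w y (EuclideanSpace.single j (1:ℝ))) _ x := hT1.add hT2
    rw [hD.fderiv]
    simp only [ContinuousLinearMap.add_apply, ContinuousLinearMap.smul_apply,
      ContinuousLinearMap.smulRight_apply, ContinuousLinearMap.comp_apply,
      ContinuousLinearMap.one_apply, Complex.ofRealCLM_apply, Complex.real_smul, one_smul,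
      smul_eq_mul]
    module
  -- sum of squares of first derivatives is 1
  have hsq : (∑ j : Fin 3, (fderiv ℝ ν x (EuclideanSpace.single j (1:ℝ))) ^ 2) = 1 := by
    have h1 := hgrad x hx
    have h2 : ∀ j : Fin 3, fderiv ℝ ν x (EuclideanSpace.single j (1:ℝ)) = gradient ν x j := by
      intro j
      have h3 : (inner ℝ (gradient ν x) (EuclideanSpace.single j (1:ℝ)) : ℝ)
          = fderiv ℝ ν x (EuclideanSpace.single j (1:ℝ)) := by
        rw [gradient]; exact InnerProductSpace.toDual_symm_apply
      rw [← h3]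
      rw [EuclideanSpace.inner_single_right]; simp
    have h3 : (∑ j : Fin 3, (gradient ν x j) ^ 2) = 1 := by
      have h5 := EuclideanSpace.norm_eq (gradient ν x)
      rw [h1] at h5
      have h4 : (∑ j : Fin 3, ‖gradient ν x j‖ ^ 2) = 1 := by
        have h6 := congrArg (fun t : ℝ => t ^ 2) h5.symm
        simpa [Real.sq_sqrt (Finset.sum_nonneg (fun i _ => sq_nonneg _))] using h6
      simpa [Real.norm_eq_abs, sq_abs] using h4
    simp only [h2]; exact h3
  have hsqC : (∑ j : Fin 3, ((fderiv ℝ ν x (EuclideanSpace.single j (1:ℝ)) : ℝ) : ℂ) *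
      ((fderiv ℝ ν x (EuclideanSpace.single j (1:ℝ)) : ℝ) : ℂ)) = 1 := by
    have : ((∑ j : Fin 3, (fderiv ℝ ν x (EuclideanSpace.single j (1:ℝ))) ^ 2 : ℝ) : ℂ) = 1 := by
      rw [hsq]; norm_num
    push_cast at this
    simpa [sq] using this
  -- compute lap f x
  have e2 : (∑ j : Fin 3,
        (gz z (Dz z P) (ν x) * ((fderiv ℝ ν x (EuclideanSpace.single j (1:ℝ)) : ℝ) : ℂ)) •
          fderiv ℝ w x (EuclideanSpace.single j (1:ℝ)))
      = gz z (Dz z P) (ν x) • (∑ j : Fin 3,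
          ((fderiv ℝ ν x (EuclideanSpace.single j (1:ℝ)) : ℝ) : ℂ) •
            fderiv ℝ w x (EuclideanSpace.single j (1:ℝ))) := by
    rw [Finset.smul_sum]
    exact Finset.sum_congr rfl fun j _ => mul_smul _ _ _
  have e3 : (∑ j : Fin 3, gz z P (ν x) •
        fderiv ℝ (fun y => fderiv ℝ w y (EuclideanSpace.single j (1:ℝ))) x
          (EuclideanSpace.single j (1:ℝ)))
      = gz z P (ν x) • lap w x := by
    rw [lap, Finset.smul_sum]
  have e1 : (∑ j : Fin 3,
        (gz z (Dz z (Dz z P)) (ν x) *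
            (((fderiv ℝ ν x (EuclideanSpace.single j (1:ℝ)) : ℝ) : ℂ) *
             ((fderiv ℝ ν x (EuclideanSpace.single j (1:ℝ)) : ℝ) : ℂ))
          + gz z (Dz z P) (ν x) *
            ((fderiv ℝ (fun y => fderiv ℝ ν y (EuclideanSpace.single j (1:ℝ))) x
                (EuclideanSpace.single j (1:ℝ)) : ℝ) : ℂ)))
      = gz z (Dz z (Dz z P)) (ν x) + gz z (Dz z P) (ν x) * ((lap ν x : ℝ) : ℂ) := by
    rw [Finset.sum_add_distrib, ← Finset.mul_sum, ← Finset.mul_sum, hsqC, mul_one]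
    congr 1
    rw [lap]
    push_cast
    rfl
  have hlap : lap f x
      = (gz z (Dz z (Dz z P)) (ν x) + gz z (Dz z P) (ν x) * ((lap ν x : ℝ) : ℂ)) • w x
        + gz z (Dz z P) (ν x) • (∑ j : Fin 3,
            ((fderiv ℝ ν x (EuclideanSpace.single j (1:ℝ)) : ℝ) : ℂ) •
              fderiv ℝ w x (EuclideanSpace.single j (1:ℝ)))
        + gz z (Dz z P) (ν x) • (∑ j : Fin 3,
            ((fderiv ℝ ν x (EuclideanSpace.single j (1:ℝ)) : ℝ) : ℂ) •
              fderiv ℝ w x (EuclideanSpace.single j (1:ℝ)))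
        + gz z P (ν x) • lap w x := by
    rw [lap, Finset.sum_congr rfl (fun j _ => hfinal j)]
    simp only [Finset.sum_add_distrib]
    rw [← Finset.sum_smul, e1, e2, e3]
  -- final assembly
  rw [hlap, hs]
  simp only [gz, Dz, Polynomial.eval_mul, Polynomial.eval_sub, Polynomial.eval_C,
    Polynomial.derivative_mul, Polynomial.derivative_sub, Polynomial.derivative_C,
    Polynomial.eval_add, zero_mul, zero_sub, sub_zero, zero_add,
    Polynomial.eval_ofNat, Polynomial.eval_smul]
  match_scalars <;> ring
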